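/- Let (T, η, μ) be a monad on the category of sets such that T preserves weak pullbacks and μ is weakly cartesian (a BC monad). Then for every function f : X → Y between sets and every natural number k, the k-fold T-image of the naturality square of μ at f is a weak pullback: for all u ∈ T^{k+1}X and v ∈ T^{k+2}Y with (T^{k+1}f)(u) = (T^{k}μ_Y)(v), there exists w ∈ T^{k+2}X with (T^{k}μ_X)(w) = u and (T^{k+2}f)(w) = v. Consequently, for every T-algebra (A, e), all the squares of face maps d_i, d_j with 0 ≤ i < j − 1 in the bar construction of A are weak pullbacks; i.e., the bar construction of any algebra of a BC monad is inner span complete. -/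

import Mathlib

open CategoryTheory

universe u

/-- Iterated application of (the functor part of) a monad on `Set`. -/
def Tpow (T : CategoryTheory.Monad (Type u)) : ℕ → Type u → Type u
  | 0, X => X
  | k + 1, X => T.obj (Tpow T k X)

/-- Iterated application of the monad functor to a function. -/
def TpowMap (T : CategoryTheory.Monad (Type u)) :
    (k : ℕ) → {X Y : Type u} → (X → Y) → Tpow T k X → Tpow T k Y
  | 0, _, _, f => f
  | k + 1, _, _, f => T.map (TypeCat.ofHom (TpowMap T k f))


lemma TpowMap_comp (T : CategoryTheory.Monad (Type u)) (k : ℕ) {X Y Z : Type u}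
    (f : X → Y) (g : Y → Z) (x : Tpow T k X) :
    TpowMap T k g (TpowMap T k f x) = TpowMap T k (fun a => g (f a)) x := by
  induction k generalizing X Y Z with
  | zero => rfl
  | succ k ih =>
      show T.map (TypeCat.ofHom (TpowMap T k g)) (T.map (TypeCat.ofHom (TpowMap T k f)) x) = T.map (TypeCat.ofHom (TpowMap T k (fun a => g (f a)))) x
      have e := T.map_comp (TypeCat.ofHom (TpowMap T k f)) (TypeCat.ofHom (TpowMap T k g))
      have e2 : TypeCat.ofHom (TpowMap T k f) ≫ TypeCat.ofHom (TpowMap T k g) = TypeCat.ofHom (TpowMap T k (fun a => g (f a))) :=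
        (show TypeCat.ofHom (fun a => TpowMap T k g (TpowMap T k f a)) = _ from congrArg TypeCat.ofHom (funext fun a => ih f g a))
      rw [e2] at e
      exact (congrArg (fun (h : T.obj (Tpow T k X) ⟶ T.obj (Tpow T k Z)) => h (x : T.obj (Tpow T k X))) e).symm

/-- For a BC monad on `Set` (the functor preserves weak pullbacks and `μ` is weakly
cartesian), every `k`-fold `T`-image of a naturality square of `μ` is a weak pullback.
These are exactly the squares of face maps `d_i, d_j` with `i < j - 1` in the bar
construction of any algebra, so the bar construction is inner span complete. -/
theorem BC_monad_bar_construction_inner_span_complete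
    (T : CategoryTheory.Monad (Type u))
    (hT : ∀ {A B C D : Type u} (f : A → B) (g : A → C) (m : B → D) (n : C → D),
      (∀ a, m (f a) = n (g a)) →
      (∀ (b : B) (c : C), m b = n c → ∃ a : A, f a = b ∧ g a = c) →
      ∀ (b : T.obj B) (c : T.obj C), T.map (TypeCat.ofHom m) b = T.map (TypeCat.ofHom n) c →
        ∃ a : T.obj A, T.map (TypeCat.ofHom f) a = b ∧ T.map (TypeCat.ofHom g) a = c)
    (hμ : ∀ {X Y : Type u} (f : X → Y) (u : T.obj X) (v : T.obj (T.obj Y)),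
      T.map (TypeCat.ofHom f) u = T.μ.app Y v →
        ∃ w : T.obj (T.obj X), T.μ.app X w = u ∧ T.map (T.map (TypeCat.ofHom f)) w = v) :
    ∀ (k : ℕ) (X Y : Type u) (f : X → Y)
      (u : Tpow T k (T.obj X)) (v : Tpow T k (T.obj (T.obj Y))),
      TpowMap T k (T.map (TypeCat.ofHom f)) u = TpowMap T k (T.μ.app Y) v →
      ∃ w : Tpow T k (T.obj (T.obj X)),
        TpowMap T k (T.μ.app X) w = u ∧ TpowMap T k (T.map (T.map (TypeCat.ofHom f))) w = v := by
  intro k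
  induction k with
  | zero => exact fun X Y f u v h => hμ f u v h
  | succ k ih =>
      intro X Y f u v h
      apply hT (TpowMap T k (T.μ.app X)) (TpowMap T k (T.map (T.map (TypeCat.ofHom f))))
        (TpowMap T k (T.map (TypeCat.ofHom f))) (TpowMap T k (T.μ.app Y)) _ (ih X Y f) u v h
      intro a
      rw [TpowMap_comp, TpowMap_comp]
      have hn : ∀ z, T.map (TypeCat.ofHom f) (T.μ.app X z) = T.μ.app Y (T.map (T.map (TypeCat.ofHom f)) z) := by
        intro z
        exact (congrArg (fun h => h z) (T.μ.naturality (TypeCat.ofHom f))).symm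
      exact congrFun (congrArg (TpowMap T k) (funext hn)) a
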